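/- arXiv:1703.09669 — 2 statements merged into one kernel-verified Lean document; each statement's English description precedes it below -/
import Mathlib

section
/- Under any (history-dependent) allocation policy, for every subset S of nodes the long-run received resources cannot exceed the total endowment of the neighbors of S. Precisely: on a probability space, suppose for each node i the generated resources D_i(t), t = 1,2,…, are i.i.d. random variables with 0 ≤ D_i(t) ≤ B and E[D_i(t)] = D_i > 0 (the vectors (D_i(t))_{i∈N} being i.i.d. across t), and suppose D_{ij}(t) ≥ 0 are random variables (the amount node i gives node j at time t, equal to 0 unless j ∈ N_i) that satisfy, almost surely for every node i and every t, Σ_{τ=1}^{t} Σ_{j∈N_i} D_{ij}(τ) ≤ Σ_{τ=1}^{t} D_i(τ). Let R_i(t) = Σ_{j∈N_i} D_{ji}(t) and R̄_i(t) = (1/t) Σ_{τ=1}^{t} R_i(τ). Then almost surely, for every S ⊆ N, limsup_{t→∞} Σ_{i∈S} R̄_i(t) ≤ f(S) and Σ_{i∈S} liminf_{t→∞} R̄_i(t) ≤ f(S). -/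
open Finset
open scoped Classical

noncomputable section

namespace SharingEcon

variable {V : Type*} [Fintype V] [DecidableEq V]

/-- The set of neighbors of a set of nodes: `N_S = ⋃ i ∈ S, N_i`. -/
def nbrs (G : SimpleGraph V) [DecidableRel G.Adj] (S : Finset V) : Finset V :=
  S.biUnion fun i => G.neighborFinset i

/-- The set function `f(S) = ∑_{j ∈ N_S} D_j`. -/
def fS (G : SimpleGraph V) [DecidableRel G.Adj] (D : V → ℝ) (S : Finset V) : ℝ :=
  ∑ j ∈ nbrs G S, D j

/-- The polymatroid polyhedron `A` of a set function `f`. -/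
def polyA (f : Finset V → ℝ) : Set (V → ℝ) :=
  {r | (∀ i, 0 ≤ r i) ∧ ∀ S : Finset V, ∑ i ∈ S, r i ≤ f S}

/-- The base `A₀` of the polymatroid. -/
def polyBase (f : Finset V → ℝ) : Set (V → ℝ) :=
  {r | r ∈ polyA f ∧ ∑ i, r i = f Finset.univ}

/-- The coordinates of a vector sorted in nondecreasing order. -/
def sortedVec (x : V → ℝ) : List ℝ :=
  (Finset.univ.val.map x).sort (· ≤ ·)

/-- `x` is lexicographically at least `y` (comparing sorted coordinate vectors). -/
def lexGE (x y : V → ℝ) : Prop :=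
  sortedVec x = sortedVec y ∨
    ∃ k : ℕ, (∀ j < k, (sortedVec x).getD j 0 = (sortedVec y).getD j 0) ∧
      (sortedVec y).getD k 0 < (sortedVec x).getD k 0

/-- `r` is lexicographically optimal in `A` for the sharing-ratio vectors `(r i / D i)`. -/
def LexOptimal (A : Set (V → ℝ)) (D : V → ℝ) (r : V → ℝ) : Prop :=
  r ∈ A ∧ ∀ r' ∈ A, lexGE (fun i => r i / D i) (fun i => r' i / D i)

/-- The sharing ratio of node `i`. -/
def ratio (D r : V → ℝ) (i : V) : ℝ := r i / D i

/-- The distinct values of the sharing ratios, sorted increasingly. -/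
def vals (D r : V → ℝ) : List ℝ :=
  (Finset.univ.image (ratio D r)).sort (· ≤ ·)

/-- The number `K(r)` of distinct sharing-ratio values. -/
def numLevels (D r : V → ℝ) : ℕ := (vals D r).length

/-- The `k`-th smallest distinct ratio value `v_k(r)` (1-indexed). -/
def v (D r : V → ℝ) (k : ℕ) : ℝ := (vals D r).getD (k - 1) 0

/-- The `k`-th level set `L_k(r)` (1-indexed). -/
def level (D r : V → ℝ) (k : ℕ) : Finset V :=
  Finset.univ.filter fun i => ratio D r i = v D r k

end SharingEcon
open MeasureTheory ProbabilityTheory Filter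

namespace SharingEcon

open scoped Topology

/-- Auxiliary: swapping a double sum over the edges incident to `S`. -/
lemma sum_nbr_swap {V : Type*} [Fintype V] [DecidableEq V]
    (G : SimpleGraph V) [DecidableRel G.Adj] (S : Finset V) (f : V → V → ℝ)
    (hf : ∀ j i, 0 ≤ f j i) :
    ∑ i ∈ S, ∑ j ∈ G.neighborFinset i, f j i ≤
      ∑ j ∈ nbrs G S, ∑ i ∈ G.neighborFinset j, f j i := by
  calc ∑ i ∈ S, ∑ j ∈ G.neighborFinset i, f j i
      = ∑ i ∈ S, ∑ j ∈ Finset.univ, if j ∈ G.neighborFinset i then f j i else 0 := by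
        refine Finset.sum_congr rfl fun i _ => ?_
        rw [Finset.sum_ite_mem, Finset.univ_inter]
    _ = ∑ j ∈ Finset.univ, ∑ i ∈ S, if j ∈ G.neighborFinset i then f j i else 0 :=
        Finset.sum_comm
    _ ≤ ∑ j ∈ Finset.univ, if j ∈ nbrs G S then ∑ i ∈ G.neighborFinset j, f j i else 0 := by
        refine Finset.sum_le_sum fun j _ => ?_
        by_cases hj : j ∈ nbrs G S
        · simp only [hj, if_true]
          rw [← Finset.sum_filter]
          refine Finset.sum_le_sum_of_subset_of_nonneg ?_ (fun i _ _ => hf j i)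
          intro i hi
          rw [Finset.mem_filter] at hi
          rw [SimpleGraph.mem_neighborFinset] at hi ⊢
          exact hi.2.symm
        · simp only [hj, if_false]
          refine le_of_eq (Finset.sum_eq_zero fun i hi => ?_)
          rw [if_neg]
          intro hmem
          exact hj (Finset.mem_biUnion.2 ⟨i, hi, hmem⟩)
    _ = ∑ j ∈ nbrs G S, ∑ i ∈ G.neighborFinset j, f j i := by
        rw [Finset.sum_ite_mem, Finset.univ_inter]

/-- under any (history-dependent) allocation policy, almost surely, for every
subset `S` of nodes, the long-run received resources cannot exceed the total endowment
`f(S)` of the neighbors of `S`: `limsup_t Σ_{i∈S} R̄_i(t) ≤ f(S)` and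
`Σ_{i∈S} liminf_t R̄_i(t) ≤ f(S)`.
(Time is indexed by `t = 1, 2, …`; sums over time use `Finset.Icc 1 t`.) -/
theorem longrun_received_upper_bound {V : Type*} [Fintype V] [DecidableEq V]
    {Ω : Type*} [MeasureSpace Ω] [IsProbabilityMeasure (ℙ : Measure Ω)]
    (G : SimpleGraph V) [DecidableRel G.Adj]
    (hconn : G.Connected) (hniso : ∀ i, (G.neighborFinset i).Nonempty)
    (D : V → ℝ) (hD : ∀ i, 0 < D i) (B : ℝ)
    -- the generated resources `D_i(t)`, i.i.d. across `t`, bounded, with mean `D_i`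
    (Dgen : ℕ → Ω → V → ℝ)
    (hmeas : ∀ t, Measurable (Dgen t))
    (hbdd : ∀ t ω i, 0 ≤ Dgen t ω i ∧ Dgen t ω i ≤ B)
    (hindep : iIndepFun Dgen ℙ)
    (hident : ∀ t, IdentDistrib (Dgen t) (Dgen 1) ℙ ℙ)
    (hmean : ∀ t i, ∫ ω, Dgen t ω i = D i)
    -- the allocations `D_{ij}(t)`: nonnegative, supported on edges, within budget a.s.
    (alloc : ℕ → Ω → V → V → ℝ)
    (halloc_nonneg : ∀ t ω i j, 0 ≤ alloc t ω i j)
    (halloc_supp : ∀ t ω i j, ¬ G.Adj i j → alloc t ω i j = 0)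
    (halloc_budget : ∀ᵐ ω, ∀ i : V, ∀ t : ℕ,
      ∑ τ ∈ Finset.Icc 1 t, ∑ j ∈ G.neighborFinset i, alloc τ ω i j ≤
        ∑ τ ∈ Finset.Icc 1 t, Dgen τ ω i)
    -- received resources and their running time averages
    (R Rbar : ℕ → Ω → V → ℝ)
    (hR : ∀ t ω i, R t ω i = ∑ j ∈ G.neighborFinset i, alloc t ω j i)
    (hRbar : ∀ t ω i, Rbar t ω i = (∑ τ ∈ Finset.Icc 1 t, R τ ω i) / (t : ℝ)) :
    ∀ᵐ ω, ∀ S : Finset V,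
      limsup (fun t : ℕ => ∑ i ∈ S, Rbar t ω i) atTop ≤ fS G D S ∧
      ∑ i ∈ S, liminf (fun t : ℕ => Rbar t ω i) atTop ≤ fS G D S := by
  classical
  -- Strong law of large numbers for each coordinate
  have hslln : ∀ j : V, ∀ᵐ ω, Tendsto
      (fun n : ℕ => (∑ τ ∈ Finset.Icc 1 n, Dgen τ ω j) / (n : ℝ)) atTop (𝓝 (D j)) := by
    intro j
    set X : ℕ → Ω → ℝ := fun i ω => Dgen (1 + i) ω j with hX
    have hXmeas : ∀ i, Measurable (X i) := fun i =>
      (measurable_pi_apply j).comp (hmeas (1 + i))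
    have hXint : Integrable (X 0) ℙ := by
      refine ⟨(hXmeas 0).aestronglyMeasurable, HasFiniteIntegral.of_bounded (C := B) ?_⟩
      refine Eventually.of_forall fun ω => ?_
      have h := hbdd (1 + 0) ω j
      rw [Real.norm_eq_abs, abs_of_nonneg h.1]
      exact h.2
    have hXindep : Pairwise (Function.onFun (IndepFun · · ℙ) X) := by
      intro a b hab
      have h1 : (1 : ℕ) + a ≠ 1 + b := by omega
      exact (hindep.indepFun h1).comp (measurable_pi_apply j) (measurable_pi_apply j)
    have hXident : ∀ i, IdentDistrib (X i) (X 0) ℙ ℙ := by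
      intro i
      have h1 := (hident (1 + i)).comp (measurable_pi_apply j)
      have h2 := (hident (1 + 0)).comp (measurable_pi_apply j)
      exact h1.trans h2.symm
    have hmean0 : (ℙ : Measure Ω)[X 0] = D j := by
      simpa using hmean (1 + 0) j
    have := strong_law_ae_real X hXint hXindep hXident
    rw [hmean0] at this
    filter_upwards [this] with ω hω
    convert hω using 2 with n
    rw [show Finset.Icc 1 n = Finset.Ico 1 (n + 1) by rfl, Finset.sum_Ico_eq_sum_range]
    simp [hX]
  filter_upwards [halloc_budget, ae_all_iff.2 hslln] with ω hbudget hlln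
  -- per-set averaged upper-bound functions
  set g : Finset V → ℕ → ℝ := fun T t =>
    ∑ j ∈ nbrs G T, (∑ τ ∈ Finset.Icc 1 t, Dgen τ ω j) / (t : ℝ) with hg
  have hgt : ∀ T : Finset V, Tendsto (g T) atTop (𝓝 (fS G D T)) := by
    intro T
    exact tendsto_finset_sum _ fun j _ => hlln j
  -- the key deterministic inequality
  have hRbar_nonneg : ∀ t i, 0 ≤ Rbar t ω i := by
    intro t i
    rw [hRbar]
    refine div_nonneg (Finset.sum_nonneg fun τ _ => ?_) (Nat.cast_nonneg t)
    rw [hR]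
    exact Finset.sum_nonneg fun k _ => halloc_nonneg τ ω k i
  have hkey : ∀ (T : Finset V) (t : ℕ), ∑ i ∈ T, Rbar t ω i ≤ g T t := by
    intro T t
    have hsums : ∑ i ∈ T, ∑ τ ∈ Finset.Icc 1 t, R τ ω i ≤
        ∑ j ∈ nbrs G T, ∑ τ ∈ Finset.Icc 1 t, Dgen τ ω j := by
      calc ∑ i ∈ T, ∑ τ ∈ Finset.Icc 1 t, R τ ω i
          = ∑ τ ∈ Finset.Icc 1 t, ∑ i ∈ T, ∑ k ∈ G.neighborFinset i, alloc τ ω k i := by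
            rw [Finset.sum_comm]
            exact Finset.sum_congr rfl fun τ _ => Finset.sum_congr rfl fun i _ => hR τ ω i
        _ ≤ ∑ τ ∈ Finset.Icc 1 t, ∑ j ∈ nbrs G T, ∑ i ∈ G.neighborFinset j, alloc τ ω j i :=
            Finset.sum_le_sum fun τ _ =>
              sum_nbr_swap G T (fun k i => alloc τ ω k i) (fun k i => halloc_nonneg τ ω k i)
        _ = ∑ j ∈ nbrs G T, ∑ τ ∈ Finset.Icc 1 t, ∑ i ∈ G.neighborFinset j, alloc τ ω j i :=
            Finset.sum_comm
        _ ≤ ∑ j ∈ nbrs G T, ∑ τ ∈ Finset.Icc 1 t, Dgen τ ω j :=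
            Finset.sum_le_sum fun j _ => hbudget j t
    calc ∑ i ∈ T, Rbar t ω i
        = (∑ i ∈ T, ∑ τ ∈ Finset.Icc 1 t, R τ ω i) / (t : ℝ) := by
          rw [Finset.sum_div]
          exact Finset.sum_congr rfl fun i _ => hRbar t ω i
      _ ≤ (∑ j ∈ nbrs G T, ∑ τ ∈ Finset.Icc 1 t, Dgen τ ω j) / (t : ℝ) := by
          rcases Nat.eq_zero_or_pos t with ht | ht
          · subst ht; simp
          · have ht' : (0 : ℝ) < t := by exact_mod_cast ht
            exact div_le_div_of_nonneg_right hsums ht'.le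
      _ = g T t := by simp [hg, Finset.sum_div]
  -- boundedness facts
  have hAge : ∀ T : Finset V, IsBoundedUnder (· ≥ ·) atTop
      (fun t : ℕ => ∑ i ∈ T, Rbar t ω i) :=
    fun T => isBoundedUnder_of ⟨0, fun (t : ℕ) =>
      Finset.sum_nonneg fun i _ => hRbar_nonneg t i⟩
  have hAle : ∀ T : Finset V, IsBoundedUnder (· ≤ ·) atTop
      (fun t : ℕ => ∑ i ∈ T, Rbar t ω i) :=
    fun T => (hgt T).isBoundedUnder_le.mono_le (Eventually.of_forall (hkey T))
  have hlimsup : ∀ T : Finset V,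
      limsup (fun t : ℕ => ∑ i ∈ T, Rbar t ω i) atTop ≤ fS G D T := by
    intro T
    have h1 : limsup (fun t : ℕ => ∑ i ∈ T, Rbar t ω i) atTop ≤ limsup (g T) atTop :=
      limsup_le_limsup (Eventually.of_forall (hkey T))
        ((hAge T).isCoboundedUnder_le) (hgt T).isBoundedUnder_le
    rwa [(hgt T).limsup_eq] at h1
  intro S
  refine ⟨hlimsup S, ?_⟩
  -- superadditivity of liminf over the finite sum
  have hsumliminf : ∀ T : Finset V,
      ∑ i ∈ T, liminf (fun t : ℕ => Rbar t ω i) atTop ≤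
        liminf (fun t : ℕ => ∑ i ∈ T, Rbar t ω i) atTop := by
    intro T
    induction T using Finset.induction_on with
    | empty => simp
    | @insert a T ha ih =>
      have hRa_ge : IsBoundedUnder (· ≥ ·) atTop (fun t : ℕ => Rbar t ω a) :=
        isBoundedUnder_of ⟨0, fun (t : ℕ) => hRbar_nonneg t a⟩
      have hRa_le : IsBoundedUnder (· ≤ ·) atTop (fun t : ℕ => Rbar t ω a) := by
        have := hAle {a}
        simpa using this
      have heq : (fun t : ℕ => ∑ i ∈ insert a T, Rbar t ω i) =
          (fun t : ℕ => Rbar t ω a) + (fun t : ℕ => ∑ i ∈ T, Rbar t ω i) := by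
        funext t
        simp [Finset.sum_insert ha]
      rw [Finset.sum_insert ha, heq]
      calc liminf (fun t : ℕ => Rbar t ω a) atTop +
            ∑ i ∈ T, liminf (fun t : ℕ => Rbar t ω i) atTop
          ≤ liminf (fun t : ℕ => Rbar t ω a) atTop +
            liminf (fun t : ℕ => ∑ i ∈ T, Rbar t ω i) atTop := by
            exact add_le_add_right ih _
        _ ≤ liminf ((fun t : ℕ => Rbar t ω a) + fun t : ℕ => ∑ i ∈ T, Rbar t ω i) atTop :=
            le_liminf_add hRa_ge hRa_le (hAge T) ((hAle T).isCoboundedUnder_ge)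
  refine (hsumliminf S).trans ?_
  exact (liminf_le_limsup (hAle S) (hAge S)).trans (hlimsup S)

end SharingEcon
end
end

section
/- Characterization of the lexicographically optimal vector in a polymatroid: a vector r ∈ A is lex-optimal if and only if Σ_{i∈L_1(r)} r_i = f(L_1(r)) and, for every 2 ≤ k ≤ K(r), Σ_{i∈L_k(r)} r_i = f(∪_{l=1}^{k} L_l(r)) − f(∪_{l=1}^{k−1} L_l(r)). -/
open Finset
open scoped Classical

noncomputable section

namespace SharingEcon

set_option linter.unusedSectionVars false

section Helpers
variable {V : Type*} [Fintype V] [DecidableEq V]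

/-- count of coordinates `≤ t`. -/
private def cnt (x : V → ℝ) (t : ℝ) : ℕ := (Finset.univ.filter (fun i => x i ≤ t)).card

private lemma getD_mem_of_lt {a : List ℝ} {j : ℕ} (hj : j < a.length) : a.getD j 0 ∈ a := by
  rw [List.getD_eq_getElem?_getD, List.getElem?_eq_getElem hj]
  exact List.getElem_mem hj

private lemma sorted_getD_le_iff : ∀ (a : List ℝ), a.Pairwise (· ≤ ·) → ∀ (j : ℕ), j < a.length → ∀ (t : ℝ),
    (a.getD j 0 ≤ t ↔ j < a.countP (fun y => decide (y ≤ t)))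
  | [], _, j, hj, t => by simp at hj
  | x :: tl, ha, j, hj, t => by
    have hx : ∀ y ∈ tl, x ≤ y := (List.pairwise_cons.1 ha).1
    have htl : tl.Pairwise (· ≤ ·) := (List.pairwise_cons.1 ha).2
    by_cases hxt : x ≤ t
    · cases j with
      | zero => simp [List.countP_cons, hxt]
      | succ j =>
        have hj' : j < tl.length := by simpa using hj
        have h := sorted_getD_le_iff tl htl j hj' t
        simp only [List.getD_cons_succ, List.countP_cons, hxt, decide_true, if_true, h]
        omega
    · have h0 : (x :: tl).countP (fun y => decide (y ≤ t)) = 0 := by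
        rw [List.countP_eq_zero]
        intro y hy
        simp only [decide_eq_true_eq]
        rcases List.mem_cons.1 hy with h | h
        · subst h; exact hxt
        · exact fun hle => hxt (le_trans (hx y h) hle)
      rw [h0]
      simp only [Nat.not_lt_zero, iff_false]
      cases j with
      | zero => simpa using hxt
      | succ j =>
        have hj' : j < tl.length := by simpa using hj
        intro hle
        exact hxt (le_trans (hx _ (getD_mem_of_lt hj')) hle)

private lemma sorted_getD_mono {a : List ℝ} (ha : a.Pairwise (· ≤ ·)) {i j : ℕ}
    (hij : i ≤ j) (hj : j < a.length) : a.getD i 0 ≤ a.getD j 0 := by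
  have hi : i < a.length := lt_of_le_of_lt hij hj
  rw [List.getD_eq_getElem?_getD, List.getElem?_eq_getElem hi,
      List.getD_eq_getElem?_getD, List.getElem?_eq_getElem hj]
  exact List.Pairwise.rel_get_of_le ha (by exact_mod_cast hij)

private lemma lex_asymm {a b : List ℝ}
    (h1 : ∃ k, (∀ j < k, a.getD j 0 = b.getD j 0) ∧ b.getD k 0 < a.getD k 0)
    (h2 : ∃ k, (∀ j < k, a.getD j 0 = b.getD j 0) ∧ a.getD k 0 < b.getD k 0) : False := by
  obtain ⟨k1, e1, l1⟩ := h1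
  obtain ⟨k2, e2, l2⟩ := h2
  rcases lt_trichotomy k1 k2 with h | h | h
  · exact absurd (e2 _ h) (ne_of_gt l1)
  · subst h; exact absurd l2 (not_lt.2 l1.le)
  · exact absurd (e1 _ h) (ne_of_lt l2)

private lemma length_sortedVec (x : V → ℝ) : (sortedVec x).length = Fintype.card V := by
  unfold sortedVec
  rw [Multiset.length_sort, Multiset.card_map]
  rfl

private lemma sorted_sortedVec (x : V → ℝ) : (sortedVec x).Pairwise (· ≤ ·) :=
  Multiset.pairwise_sort _ _

private lemma countP_sortedVec (x : V → ℝ) (t : ℝ) :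
    (sortedVec x).countP (fun y => decide (y ≤ t)) = cnt x t := by
  have h : ((sortedVec x) : Multiset ℝ) = Finset.univ.val.map x := Multiset.sort_eq _ _
  have h2 : (sortedVec x).countP (fun y => decide (y ≤ t))
      = Multiset.countP (fun y => y ≤ t) (Finset.univ.val.map x) := by
    rw [← h]; rfl
  rw [h2, Multiset.countP_map]
  show _ = (Finset.univ.filter (fun i => x i ≤ t)).card
  rw [Finset.card_def, Finset.filter_val]

private lemma mem_sortedVec {x : V → ℝ} {c : ℝ} (h : c ∈ sortedVec x) : ∃ i, x i = c := by
  have h2 : c ∈ Finset.univ.val.map x := by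
    rw [← Multiset.sort_eq (Finset.univ.val.map x) (· ≤ ·)]
    exact h
  obtain ⟨i, _, hi⟩ := Multiset.mem_map.1 h2
  exact ⟨i, hi⟩

private lemma char_getD {x : V → ℝ} {j : ℕ} (hj : j < (sortedVec x).length) (s : ℝ) :
    (sortedVec x).getD j 0 ≤ s ↔ j < cnt x s := by
  rw [← countP_sortedVec x s]
  exact sorted_getD_le_iff _ (sorted_sortedVec x) j hj s

private lemma cnt_le_card (x : V → ℝ) (s : ℝ) : cnt x s ≤ Fintype.card V := by
  rw [← countP_sortedVec x s, ← length_sortedVec x]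
  exact List.countP_le_length

private lemma strict_of_counts {x y : V → ℝ} (t : ℝ)
    (h1 : ∀ s, s < t → cnt y s = cnt x s)
    (h2 : cnt y t < cnt x t) :
    ∃ k, (∀ j < k, (sortedVec x).getD j 0 = (sortedVec y).getD j 0) ∧
      (sortedVec x).getD k 0 < (sortedVec y).getD k 0 := by
  have hla : (sortedVec x).length = Fintype.card V := length_sortedVec x
  have hlb : (sortedVec y).length = Fintype.card V := length_sortedVec y
  have hk_lt_n : cnt y t < Fintype.card V := lt_of_lt_of_le h2 (cnt_le_card x t)
  have hka : cnt y t < (sortedVec x).length := by rw [hla]; exact hk_lt_n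
  have hkb : cnt y t < (sortedVec y).length := by rw [hlb]; exact hk_lt_n
  refine ⟨cnt y t, ?_, ?_⟩
  · intro j hj
    have hja : j < (sortedVec x).length := lt_trans hj hka
    have hjb : j < (sortedVec y).length := lt_trans hj hkb
    have haj : (sortedVec x).getD j 0 ≤ t := (char_getD hja t).2 (lt_trans hj h2)
    have hbj : (sortedVec y).getD j 0 ≤ t := (char_getD hjb t).2 hj
    by_contra hne
    rcases lt_or_gt_of_ne hne with hltj | hltj
    · have hs_lt : (sortedVec x).getD j 0 < t := lt_of_lt_of_le hltj hbj
      have heq := h1 _ hs_lt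
      have hx : j < cnt x ((sortedVec x).getD j 0) := (char_getD hja _).1 le_rfl
      have hy : ¬ j < cnt y ((sortedVec x).getD j 0) := fun hc =>
        absurd ((char_getD hjb _).2 hc) (not_le.2 hltj)
      omega
    · have hs_lt : (sortedVec y).getD j 0 < t := lt_of_lt_of_le hltj haj
      have heq := h1 _ hs_lt
      have hy : j < cnt y ((sortedVec y).getD j 0) := (char_getD hjb _).1 le_rfl
      have hx : ¬ j < cnt x ((sortedVec y).getD j 0) := fun hc =>
        absurd ((char_getD hja _).2 hc) (not_le.2 hltj)
      omega
  · have hak : (sortedVec x).getD (cnt y t) 0 ≤ t := (char_getD hka t).2 h2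
    have hbk : ¬ (sortedVec y).getD (cnt y t) 0 ≤ t := fun hc =>
      absurd ((char_getD hkb t).1 hc) (lt_irrefl _)
    exact lt_of_le_of_lt hak (not_le.1 hbk)

private lemma counts_of_strict {x y : V → ℝ} {k : ℕ}
    (hpre : ∀ j < k, (sortedVec x).getD j 0 = (sortedVec y).getD j 0)
    (hlt : (sortedVec x).getD k 0 < (sortedVec y).getD k 0) :
    k < Fintype.card V ∧
      (∀ s, s < (sortedVec y).getD k 0 → cnt y s ≤ cnt x s) ∧
      cnt y ((sortedVec x).getD k 0) ≤ k ∧ k < cnt x ((sortedVec x).getD k 0) := by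
  have hla : (sortedVec x).length = Fintype.card V := length_sortedVec x
  have hlb : (sortedVec y).length = Fintype.card V := length_sortedVec y
  have hkn : k < Fintype.card V := by
    by_contra hkn
    have h1 : (sortedVec x).getD k 0 = 0 := by
      rw [List.getD_eq_getElem?_getD, List.getElem?_eq_none (by omega)]; rfl
    have h2 : (sortedVec y).getD k 0 = 0 := by
      rw [List.getD_eq_getElem?_getD, List.getElem?_eq_none (by omega)]; rfl
    rw [h1, h2] at hlt; exact lt_irrefl _ hlt
  have hka : k < (sortedVec x).length := by omega
  have hkb : k < (sortedVec y).length := by omega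
  refine ⟨hkn, ?_, ?_, ?_⟩
  · intro s hs
    rcases Nat.eq_zero_or_pos (cnt y s) with hc | hc
    · omega
    · have hcb : cnt y s - 1 < (sortedVec y).length := by
        have := cnt_le_card y s; omega
      have hb1 : (sortedVec y).getD (cnt y s - 1) 0 ≤ s := (char_getD hcb s).2 (by omega)
      have hck : cnt y s - 1 < k := by
        by_contra hck
        have hmono := sorted_getD_mono (sorted_sortedVec y) (show k ≤ cnt y s - 1 by omega) hcb
        have : (sortedVec y).getD k 0 ≤ s := le_trans hmono hb1
        exact absurd this (not_le.2 hs)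
      have ha1 : (sortedVec x).getD (cnt y s - 1) 0 ≤ s := by
        rw [hpre _ hck]; exact hb1
      have : cnt y s - 1 < cnt x s := (char_getD (by omega : cnt y s - 1 < (sortedVec x).length) s).1 ha1
      omega
  · have : ¬ k < cnt y ((sortedVec x).getD k 0) := fun hc =>
      absurd ((char_getD hkb _).2 hc) (not_le.2 hlt)
    omega
  · exact (char_getD hka _).1 le_rfl

private lemma no_strict_improvement {x y : V → ℝ} (hge : lexGE x y)
    (hst : ∃ k, (∀ j < k, (sortedVec x).getD j 0 = (sortedVec y).getD j 0) ∧
      (sortedVec x).getD k 0 < (sortedVec y).getD k 0) : False := by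
  rcases hge with heq | hgt
  · obtain ⟨k, _, hk⟩ := hst
    rw [heq] at hk
    exact lt_irrefl _ hk
  · exact lex_asymm hgt hst

private lemma getD_eq_get {a : List ℝ} {n : ℕ} (hn : n < a.length) :
    a.getD n 0 = a.get ⟨n, hn⟩ := by
  rw [List.getD_eq_getElem?_getD, List.getElem?_eq_getElem hn]
  rfl

end Helpers

section Levels
set_option linter.unusedSectionVars false
variable {V : Type*} [Fintype V] [DecidableEq V] (D r : V → ℝ)

/-- the union of the first `m` level sets. -/
private def Sk (m : ℕ) : Finset V := Finset.univ.filter (fun i => ratio D r i ≤ v D r m)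

private lemma cnt_ratio_v (m : ℕ) : cnt (ratio D r) (v D r m) = (Sk D r m).card := rfl

private lemma exists_level_index (i : V) :
    ∃ m, 1 ≤ m ∧ m ≤ numLevels D r ∧ ratio D r i = v D r m := by
  have hmem : ratio D r i ∈ vals D r := by
    rw [vals, Finset.mem_sort]
    exact Finset.mem_image_of_mem _ (Finset.mem_univ i)
  obtain ⟨⟨n, hn⟩, hget⟩ := List.mem_iff_get.1 hmem
  refine ⟨n + 1, by omega, ?_, ?_⟩
  · show n + 1 ≤ (vals D r).length
    omega
  · show ratio D r i = (vals D r).getD (n + 1 - 1) 0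
    simp only [Nat.add_sub_cancel]
    rw [getD_eq_get hn, hget]

private lemma v_strictMono {l m : ℕ} (hl : 1 ≤ l) (hlm : l < m) (hm : m ≤ numLevels D r) :
    v D r l < v D r m := by
  have hK : numLevels D r = (vals D r).length := rfl
  have h1 : l - 1 < (vals D r).length := by omega
  have h2 : m - 1 < (vals D r).length := by omega
  have hsorted : (vals D r).Pairwise (· < ·) := (Finset.sortedLT_sort _).pairwise
  show (vals D r).getD (l-1) 0 < (vals D r).getD (m-1) 0
  rw [getD_eq_get h1, getD_eq_get h2]
  exact hsorted.rel_get_of_lt (show (⟨l-1, h1⟩ : Fin _) < ⟨m-1, h2⟩ from by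
    rw [Fin.mk_lt_mk]; omega)

private lemma v_mono {l m : ℕ} (hl : 1 ≤ l) (hlm : l ≤ m) (hm : m ≤ numLevels D r) :
    v D r l ≤ v D r m := by
  rcases eq_or_lt_of_le hlm with h | h
  · rw [h]
  · exact le_of_lt (v_strictMono D r hl h hm)

private lemma exists_ratio_eq_v {m : ℕ} (hm1 : 1 ≤ m) (hm : m ≤ numLevels D r) :
    ∃ i, ratio D r i = v D r m := by
  have hK : numLevels D r = (vals D r).length := rfl
  have h1 : m - 1 < (vals D r).length := by omega
  have hmem : v D r m ∈ vals D r := by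
    show (vals D r).getD (m-1) 0 ∈ vals D r
    rw [getD_eq_get h1]
    exact List.get_mem _ _
  rw [vals, Finset.mem_sort] at hmem
  obtain ⟨i, _, hi⟩ := Finset.mem_image.1 hmem
  exact ⟨i, hi⟩

private lemma level_subset_Sk {m : ℕ} : level D r m ⊆ Sk D r m := by
  intro i hi
  rw [level, Finset.mem_filter] at hi
  rw [Sk, Finset.mem_filter]
  exact ⟨Finset.mem_univ i, le_of_eq hi.2⟩

private lemma biUnion_levels {m : ℕ} (hm1 : 1 ≤ m) (hm : m ≤ numLevels D r) :
    (Finset.Icc 1 m).biUnion (level D r) = Sk D r m := by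
  ext i
  simp only [Finset.mem_biUnion, Finset.mem_Icc, Sk, level, Finset.mem_filter,
    Finset.mem_univ, true_and]
  constructor
  · rintro ⟨l, ⟨hl1, hlm⟩, hi⟩
    rw [hi]
    exact v_mono D r hl1 hlm hm
  · intro hle
    obtain ⟨l, hl1, hlK, hil⟩ := exists_level_index D r i
    refine ⟨l, ⟨hl1, ?_⟩, hil⟩
    by_contra hml
    have hv : v D r m < v D r l := v_strictMono D r hm1 (by omega) hlK
    rw [← hil] at hv
    exact absurd hle (not_le.2 hv)

private lemma Sk_one (hK : 1 ≤ numLevels D r) : Sk D r 1 = level D r 1 := by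
  ext i
  simp only [Sk, level, Finset.mem_filter, Finset.mem_univ, true_and]
  constructor
  · intro hle
    obtain ⟨l, hl1, hlK, hil⟩ := exists_level_index D r i
    have : v D r 1 ≤ v D r l := v_mono D r le_rfl hl1 hlK
    rw [← hil] at this
    exact le_antisymm hle this
  · exact le_of_eq

private lemma Sk_succ {m : ℕ} (hm1 : 1 ≤ m) (hm : m + 1 ≤ numLevels D r) :
    Sk D r (m+1) = Sk D r m ∪ level D r (m+1) := by
  ext i
  simp only [Sk, level, Finset.mem_filter, Finset.mem_univ, true_and, Finset.mem_union]
  constructor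
  · intro hle
    obtain ⟨l, hl1, hlK, hil⟩ := exists_level_index D r i
    have hlm : l ≤ m + 1 := by
      by_contra hml
      have hv : v D r (m+1) < v D r l := v_strictMono D r (by omega) (by omega) hlK
      rw [← hil] at hv
      exact absurd hle (not_le.2 hv)
    rcases eq_or_lt_of_le hlm with h | h
    · right; rw [hil, h]
    · left; rw [hil]; exact v_mono D r hl1 (by omega) (by omega)
  · rintro (h | h)
    · exact le_trans h (le_of_lt (v_strictMono D r hm1 (by omega) hm))
    · exact le_of_eq h

private lemma Sk_disj {m : ℕ} (hm1 : 1 ≤ m) (hm : m + 1 ≤ numLevels D r) :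
    Disjoint (Sk D r m) (level D r (m+1)) := by
  rw [Finset.disjoint_left]
  intro i hi hi'
  rw [Sk, Finset.mem_filter] at hi
  rw [level, Finset.mem_filter] at hi'
  have hv : v D r m < v D r (m+1) := v_strictMono D r hm1 (by omega) hm
  rw [← hi'.2] at hv
  exact absurd hi.2 (not_le.2 hv)

end Levels

section Tight
set_option linter.unusedSectionVars false
variable {V : Type*} [Fintype V] [DecidableEq V] (f : Finset V → ℝ) (r : V → ℝ)

private def Tight (S : Finset V) : Prop := ∑ i ∈ S, r i = f S

variable {f r}

private lemma tight_union (hr : r ∈ polyA f)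
    (hsub : ∀ S T : Finset V, f (S ∩ T) + f (S ∪ T) ≤ f S + f T)
    {S T : Finset V} (hS : Tight f r S) (hT : Tight f r T) :
    Tight f r (S ∪ T) ∧ Tight f r (S ∩ T) := by
  have h1 : ∑ i ∈ S ∪ T, r i + ∑ i ∈ S ∩ T, r i = ∑ i ∈ S, r i + ∑ i ∈ T, r i :=
    Finset.sum_union_inter
  have h2 := hr.2 (S ∪ T)
  have h3 := hr.2 (S ∩ T)
  have h4 := hsub S T
  unfold Tight at *
  constructor <;> linarith

private lemma tight_empty (hf0 : f ∅ = 0) : Tight f r ∅ := by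
  unfold Tight
  simp [hf0]

private lemma tight_biUnion (hf0 : f ∅ = 0) (hr : r ∈ polyA f)
    (hsub : ∀ S T : Finset V, f (S ∩ T) + f (S ∪ T) ≤ f S + f T)
    (s : Finset V) (g : V → Finset V) (hg : ∀ i ∈ s, Tight f r (g i)) :
    Tight f r (s.biUnion g) := by
  induction s using Finset.induction_on with
  | empty => simpa [Finset.biUnion_empty] using tight_empty hf0
  | @insert a s ha ih =>
    rw [Finset.biUnion_insert]
    exact (tight_union hr hsub (hg a (Finset.mem_insert_self a s))
      (ih (fun i hi => hg i (Finset.mem_insert_of_mem hi)))).1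

private lemma mem_inf_finsets (F : Finset (Finset V)) (j : V) :
    j ∈ F.inf id ↔ ∀ T ∈ F, j ∈ T := by
  induction F using Finset.cons_induction with
  | empty => simp [Finset.inf_empty]
  | cons a F ha ih =>
    rw [Finset.inf_cons]
    have hmm : j ∈ id a ⊓ F.inf id ↔ j ∈ a ∧ j ∈ F.inf id := by
      show j ∈ a ∩ F.inf id ↔ _
      exact Finset.mem_inter
    rw [hmm, ih]
    constructor
    · rintro ⟨h1, h2⟩ T hT
      rcases Finset.mem_cons.1 hT with h | h
      · rwa [h]
      · exact h2 T h
    · intro h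
      exact ⟨h a (Finset.mem_cons_self a F), fun T hT => h T (Finset.mem_cons_of_mem hT)⟩

private lemma tight_inter_fam (hr : r ∈ polyA f)
    (hsub : ∀ S T : Finset V, f (S ∩ T) + f (S ∪ T) ≤ f S + f T)
    {T₀ : Finset V} (hT₀ : Tight f r T₀) (F : Finset (Finset V))
    (hF : ∀ T ∈ F, Tight f r T) : Tight f r (T₀ ∩ F.inf id) := by
  induction F using Finset.cons_induction with
  | empty =>
    rw [Finset.inf_empty]
    have : T₀ ∩ (⊤ : Finset V) = T₀ := by
      rw [Finset.top_eq_univ, Finset.inter_univ]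
    rwa [this]
  | cons a F ha ih =>
    rw [Finset.inf_cons]
    have heq : T₀ ∩ (id a ⊓ F.inf id) = a ∩ (T₀ ∩ F.inf id) := by
      show T₀ ∩ (a ∩ F.inf id) = a ∩ (T₀ ∩ F.inf id)
      rw [Finset.inter_left_comm]
    rw [heq]
    exact (tight_union hr hsub (hF a (Finset.mem_cons_self a F))
      (ih (fun T hT => hF T (Finset.mem_cons_of_mem hT)))).2

private lemma tight_Ti (hr : r ∈ polyA f)
    (hsub : ∀ S T : Finset V, f (S ∩ T) + f (S ∪ T) ≤ f S + f T)
    {i : V} {T₀ : Finset V} (hT₀ : Tight f r T₀) (hiT₀ : i ∈ T₀) :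
    Tight f r (Finset.univ.filter (fun j => ∀ T : Finset V, Tight f r T → i ∈ T → j ∈ T)) := by
  set F : Finset (Finset V) :=
    Finset.univ.filter (fun T => Tight f r T ∧ i ∈ T) with hF
  have hmemF : ∀ T, T ∈ F ↔ (Tight f r T ∧ i ∈ T) := by
    intro T; rw [hF, Finset.mem_filter]; simp
  have hT₀F : T₀ ∈ F := (hmemF T₀).2 ⟨hT₀, hiT₀⟩
  have hTiEq : Finset.univ.filter (fun j => ∀ T : Finset V, Tight f r T → i ∈ T → j ∈ T)
      = T₀ ∩ F.inf id := by
    ext j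
    rw [Finset.mem_filter, Finset.mem_inter, mem_inf_finsets]
    constructor
    · intro ⟨_, h⟩
      exact ⟨h T₀ hT₀ hiT₀, fun T hT => h T ((hmemF T).1 hT).1 ((hmemF T).1 hT).2⟩
    · intro ⟨_, h⟩
      exact ⟨Finset.mem_univ j, fun T hT hiT => h T ((hmemF T).2 ⟨hT, hiT⟩)⟩
  rw [hTiEq]
  exact tight_inter_fam hr hsub hT₀ F (fun T hT => ((hmemF T).1 hT).1)

end Tight

section MainLemmas
set_option linter.unusedSectionVars false
variable {V : Type*} [Fintype V] [DecidableEq V]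

private lemma list_lex_trichotomy : ∀ (a b : List ℝ), a.length = b.length →
    a = b ∨ (∃ k, (∀ j < k, a.getD j 0 = b.getD j 0) ∧ b.getD k 0 < a.getD k 0)
        ∨ (∃ k, (∀ j < k, a.getD j 0 = b.getD j 0) ∧ a.getD k 0 < b.getD k 0)
  | [], [], _ => Or.inl rfl
  | [], b :: l, h => by simp at h
  | a :: l, [], h => by simp at h
  | a :: l1, b :: l2, h => by
    rcases lt_trichotomy a b with hab | hab | hab
    · exact Or.inr (Or.inr ⟨0, fun j hj => absurd hj (Nat.not_lt_zero j), by simpa using hab⟩)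
    · subst hab
      rcases list_lex_trichotomy l1 l2 (by simpa using h) with he | ⟨k, h1, h2⟩ | ⟨k, h1, h2⟩
      · exact Or.inl (by rw [he])
      · refine Or.inr (Or.inl ⟨k + 1, fun j hj => ?_, by simpa using h2⟩)
        cases j with
        | zero => rfl
        | succ j => simpa using h1 j (by omega)
      · refine Or.inr (Or.inr ⟨k + 1, fun j hj => ?_, by simpa using h2⟩)
        cases j with
        | zero => rfl
        | succ j => simpa using h1 j (by omega)
    · exact Or.inr (Or.inl ⟨0, fun j hj => absurd hj (Nat.not_lt_zero j), by simpa using hab⟩)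

private lemma lex_trichotomy (x y : V → ℝ) :
    lexGE x y ∨ ∃ k, (∀ j < k, (sortedVec x).getD j 0 = (sortedVec y).getD j 0) ∧
      (sortedVec x).getD k 0 < (sortedVec y).getD k 0 := by
  rcases list_lex_trichotomy (sortedVec x) (sortedVec y)
      (by rw [length_sortedVec, length_sortedVec]) with h | h | h
  · exact Or.inl (Or.inl h)
  · exact Or.inl (Or.inr h)
  · exact Or.inr h

/-- The common inductive step for the sufficiency direction. -/
private lemma step_core (f : Finset V → ℝ) (D : V → ℝ) (hD : ∀ i, 0 < D i)
    (r r' : V → ℝ) (hr' : r' ∈ polyA f)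
    {t : ℝ} (hcnt : ∀ s, s ≤ t → cnt (ratio D r') s ≤ cnt (ratio D r) s)
    {l : ℕ} (hl1 : 1 ≤ l) (hlK : l ≤ numLevels D r) (hvlt : v D r l ≤ t)
    (htight : Tight f r (Sk D r l))
    {P : Finset V} (hsplit : Sk D r l = P ∪ level D r l) (hdisj : Disjoint P (level D r l))
    (hyP : ∀ i ∈ P, r' i = r i)
    (Hc : ∀ i, i ∉ P → ∀ i' ∈ P, ratio D r i' < ratio D r' i) :
    (∀ i ∈ Sk D r l, r' i = r i) ∧
      Finset.univ.filter (fun i => ratio D r' i ≤ v D r l) = Sk D r l := by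
  have hDne : ∀ i, D i ≠ 0 := fun i => ne_of_gt (hD i)
  have hratP : ∀ i ∈ P, ratio D r' i = ratio D r i := by
    intro i hi
    show r' i / D i = r i / D i
    rw [hyP i hi]
  -- Step 1 : ratios of r' on the level are at least `v l`.
  have hA : ∀ i ∈ level D r l, v D r l ≤ ratio D r' i := by
    intro i0 hi0
    by_contra hcon
    push_neg at hcon
    have hi0v : ratio D r i0 = v D r l := (Finset.mem_filter.1 hi0).2
    have hi0P : i0 ∉ P := Finset.disjoint_right.1 hdisj hi0
    set s := ratio D r' i0 with hs
    have hst : s ≤ t := le_trans (le_of_lt hcon) hvlt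
    have claim1 : Finset.univ.filter (fun i => ratio D r i ≤ s) ⊆ P := by
      intro i hi
      have hxi : ratio D r i ≤ s := (Finset.mem_filter.1 hi).2
      have hxiv : ratio D r i < v D r l := lt_of_le_of_lt hxi hcon
      have hiSk : i ∈ Sk D r l := by
        rw [Sk, Finset.mem_filter]
        exact ⟨Finset.mem_univ i, le_of_lt hxiv⟩
      rw [hsplit] at hiSk
      rcases Finset.mem_union.1 hiSk with h | h
      · exact h
      · exact absurd (Finset.mem_filter.1 h).2 (ne_of_lt hxiv)
    have claim2 : insert i0 P ⊆ Finset.univ.filter (fun i => ratio D r' i ≤ s) := by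
      intro i hi
      rcases Finset.mem_insert.1 hi with h | h
      · subst h; rw [Finset.mem_filter]; exact ⟨Finset.mem_univ _, le_rfl⟩
      · rw [Finset.mem_filter]
        refine ⟨Finset.mem_univ _, ?_⟩
        rw [hratP i h]
        exact le_of_lt (Hc i0 hi0P i h)
    have hc1 : cnt (ratio D r) s ≤ P.card := Finset.card_le_card claim1
    have hc2 : P.card + 1 ≤ cnt (ratio D r') s := by
      have := Finset.card_le_card claim2
      rwa [Finset.card_insert_of_notMem hi0P] at this
    have := hcnt s hst
    omega
  -- Step 2 : equality on the whole of `Sk l`.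
  have hrlev : ∀ i ∈ level D r l, r i ≤ r' i := by
    intro i hi
    have hxi : ratio D r i = v D r l := (Finset.mem_filter.1 hi).2
    have h1 : r i = D i * ratio D r i := by
      show r i = D i * (r i / D i)
      rw [mul_comm, div_mul_cancel₀ _ (hDne i)]
    have h2 : r' i = D i * ratio D r' i := by
      show r' i = D i * (r' i / D i)
      rw [mul_comm, div_mul_cancel₀ _ (hDne i)]
    rw [h1, h2, hxi]
    exact mul_le_mul_of_nonneg_left (hA i hi) (le_of_lt (hD i))
  have hsum_eq : ∀ i ∈ level D r l, r i = r' i := by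
    have hle : ∑ i ∈ Sk D r l, r' i ≤ ∑ i ∈ Sk D r l, r i := by
      rw [htight]; exact hr'.2 _
    rw [hsplit, Finset.sum_union hdisj, Finset.sum_union hdisj,
        Finset.sum_congr rfl hyP] at hle
    have hle2 : ∑ i ∈ level D r l, r' i ≤ ∑ i ∈ level D r l, r i := by linarith
    have hge : ∑ i ∈ level D r l, r i ≤ ∑ i ∈ level D r l, r' i :=
      Finset.sum_le_sum hrlev
    exact (Finset.sum_eq_sum_iff_of_le hrlev).1 (le_antisymm hge hle2)
  have hall : ∀ i ∈ Sk D r l, r' i = r i := by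
    intro i hi
    rw [hsplit] at hi
    rcases Finset.mem_union.1 hi with h | h
    · exact hyP i h
    · exact (hsum_eq i h).symm
  refine ⟨hall, ?_⟩
  have hsub2 : Sk D r l ⊆ Finset.univ.filter (fun i => ratio D r' i ≤ v D r l) := by
    intro i hi
    rw [Finset.mem_filter]
    refine ⟨Finset.mem_univ _, ?_⟩
    have : ratio D r' i = ratio D r i := by
      show r' i / D i = r i / D i
      rw [hall i hi]
    rw [this]
    exact (Finset.mem_filter.1 hi).2
  refine le_antisymm ?_ hsub2
  intro i hi
  by_contra hiSk
  have hyi : ratio D r' i ≤ v D r l := (Finset.mem_filter.1 hi).2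
  have hc1 : cnt (ratio D r) (v D r l) = (Sk D r l).card := rfl
  have hc2 : (Sk D r l).card + 1 ≤ cnt (ratio D r') (v D r l) := by
    have hsub3 : insert i (Sk D r l) ⊆ Finset.univ.filter (fun i => ratio D r' i ≤ v D r l) := by
      intro z hz
      rcases Finset.mem_insert.1 hz with h | h
      · subst h; exact hi
      · exact hsub2 h
    have := Finset.card_le_card hsub3
    rwa [Finset.card_insert_of_notMem hiSk] at this
  have := hcnt (v D r l) hvlt
  omega

private lemma lexopt_of_tight (f : Finset V → ℝ) (D : V → ℝ) (hD : ∀ i, 0 < D i)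
    (r : V → ℝ) (hr : r ∈ polyA f)
    (ht : ∀ m, 1 ≤ m → m ≤ numLevels D r → Tight f r (Sk D r m)) :
    LexOptimal (polyA f) D r := by
  refine ⟨hr, fun r' hr' => ?_⟩
  rcases lex_trichotomy (fun i => r i / D i) (fun i => r' i / D i) with hge | hst
  · exact hge
  · exfalso
    obtain ⟨k, hpre, hklt⟩ := hst
    have hxr : (fun i => r i / D i) = ratio D r := rfl
    have hyr : (fun i => r' i / D i) = ratio D r' := rfl
    obtain ⟨hkn, hcnt_le, hcnty_le, hcntx_gt⟩ := counts_of_strict hpre hklt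
    set t : ℝ := (sortedVec (fun i => r i / D i)).getD k 0 with htdef
    have hcnt : ∀ s, s ≤ t → cnt (ratio D r') s ≤ cnt (ratio D r) s := by
      intro s hs
      have hst : s < (sortedVec (fun i => r' i / D i)).getD k 0 := lt_of_le_of_lt hs hklt
      exact hcnt_le s hst
    -- `t` is attained by a ratio of `r`.
    have htmem : t ∈ sortedVec (fun i => r i / D i) :=
      getD_mem_of_lt (by rw [length_sortedVec]; exact hkn)
    obtain ⟨i0, hi0⟩ := mem_sortedVec htmem
    obtain ⟨m, hm1, hmK, hmv⟩ := exists_level_index D r i0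
    have htv : t = v D r m := by rw [← hi0]; exact hmv
    -- main induction over the levels
    have main : ∀ l, 1 ≤ l → l ≤ m →
        (∀ i ∈ Sk D r l, r' i = r i) ∧
          Finset.univ.filter (fun i => ratio D r' i ≤ v D r l) = Sk D r l := by
      intro l hl
      induction l, hl using Nat.le_induction with
      | base =>
        intro _
        have hK1 : 1 ≤ numLevels D r := le_trans hm1 hmK
        refine step_core f D hD r r' hr' hcnt le_rfl hK1 ?_ (ht 1 le_rfl hK1)
          (P := ∅) ?_ ?_ ?_ ?_
        · rw [htv]; exact v_mono D r le_rfl hm1 hmK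
        · rw [Sk_one D r hK1, Finset.empty_union]
        · exact Finset.disjoint_empty_left _
        · intro i hi; exact absurd hi (Finset.notMem_empty i)
        · intro i _ i' hi'; exact absurd hi' (Finset.notMem_empty i')
      | succ l hl ih =>
        intro hlm
        obtain ⟨ih1, ih2⟩ := ih (by omega)
        have hlK : l + 1 ≤ numLevels D r := le_trans hlm hmK
        refine step_core f D hD r r' hr' hcnt (by omega) hlK ?_ (ht (l+1) (by omega) hlK)
          (Sk_succ D r hl hlK) (Sk_disj D r hl hlK) ih1 ?_
        · rw [htv]; exact v_mono D r (by omega) hlm hmK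
        · intro i hiP i' hi'
          have hyi : ¬ ratio D r' i ≤ v D r l := by
            intro hcon
            exact hiP (by rw [← ih2, Finset.mem_filter]; exact ⟨Finset.mem_univ _, hcon⟩)
          have hxi' : ratio D r i' ≤ v D r l := (Finset.mem_filter.1 hi').2
          exact lt_of_le_of_lt hxi' (not_le.1 hyi)
    obtain ⟨_, hfin⟩ := main m hm1 le_rfl
    have hcy : cnt (ratio D r') (v D r m) = (Sk D r m).card := by
      rw [cnt, hfin]
    have hcx : cnt (ratio D r) (v D r m) = (Sk D r m).card := rfl
    rw [← htv] at hcy hcx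
    have e1 : cnt (fun i => r' i / D i) t = cnt (ratio D r') t := rfl
    have e2 : cnt (fun i => r i / D i) t = cnt (ratio D r) t := rfl
    omega

private lemma sum_update1 (r : V → ℝ) (i : V) (ε : ℝ) (T : Finset V) :
    ∑ z ∈ T, (if z = i then r i + ε else r z)
      = ∑ z ∈ T, r z + (if i ∈ T then ε else 0) := by
  have h : ∀ z ∈ T, (if z = i then r i + ε else r z) = r z + (if z = i then ε else 0) := by
    intro z _
    by_cases h1 : z = i
    · subst h1; simp
    · simp [h1]
  rw [Finset.sum_congr rfl h, Finset.sum_add_distrib, Finset.sum_ite_eq' T i (fun _ => ε)]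

private lemma sum_update2 (r : V → ℝ) {i j : V} (hij : i ≠ j) (ε : ℝ) (T : Finset V) :
    ∑ z ∈ T, (if z = i then r i + ε else if z = j then r j - ε else r z)
      = ∑ z ∈ T, r z + (if i ∈ T then ε else 0) - (if j ∈ T then ε else 0) := by
  have h : ∀ z ∈ T, (if z = i then r i + ε else if z = j then r j - ε else r z)
      = r z + (if z = i then ε else 0) - (if z = j then ε else 0) := by
    intro z _
    by_cases h1 : z = i
    · subst h1; rw [if_pos rfl, if_pos rfl, if_neg hij]; ring
    · by_cases h2 : z = j
      · subst h2; rw [if_neg h1, if_pos rfl, if_neg h1, if_pos rfl]; ring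
      · rw [if_neg h1, if_neg h2, if_neg h1, if_neg h2]; ring
  rw [Finset.sum_congr rfl h, Finset.sum_sub_distrib, Finset.sum_add_distrib,
      Finset.sum_ite_eq' T i (fun _ => ε), Finset.sum_ite_eq' T j (fun _ => ε)]

private lemma improve_contradiction (f : Finset V → ℝ) (D : V → ℝ) (hD : ∀ i, 0 < D i)
    (r r' : V → ℝ) (hr' : r' ∈ polyA f) (hopt : LexOptimal (polyA f) D r)
    (tv : ℝ) {i : V}
    (hxi : ratio D r i = tv)
    (hyi : tv < ratio D r' i)
    (hsame : ∀ z, z ≠ i → (ratio D r' z = ratio D r z ∨ (tv < ratio D r z ∧ tv < ratio D r' z))) :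
    False := by
  have h1 : ∀ s, s < tv → cnt (ratio D r') s = cnt (ratio D r) s := by
    intro s hs
    have hfe : Finset.univ.filter (fun z => ratio D r' z ≤ s)
        = Finset.univ.filter (fun z => ratio D r z ≤ s) := by
      ext z
      simp only [Finset.mem_filter, Finset.mem_univ, true_and]
      by_cases hz : z = i
      · subst hz
        refine iff_of_false (not_le.2 (lt_trans hs hyi)) (not_le.2 ?_)
        rw [hxi]; exact hs
      · rcases hsame z hz with h | ⟨ha, hb⟩
        · rw [h]
        · exact iff_of_false (not_le.2 (lt_trans hs hb)) (not_le.2 (lt_trans hs ha))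
    show (Finset.univ.filter (fun z => ratio D r' z ≤ s)).card
        = (Finset.univ.filter (fun z => ratio D r z ≤ s)).card
    rw [hfe]
  have h2 : cnt (ratio D r') tv < cnt (ratio D r) tv := by
    have hfe : Finset.univ.filter (fun z => ratio D r' z ≤ tv)
        = (Finset.univ.filter (fun z => ratio D r z ≤ tv)).erase i := by
      ext z
      rw [Finset.mem_erase]
      simp only [Finset.mem_filter, Finset.mem_univ, true_and]
      by_cases hz : z = i
      · subst hz
        exact iff_of_false (not_le.2 hyi) (fun h => h.1 rfl)
      · rcases hsame z hz with h | ⟨ha, hb⟩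
        · rw [h]
          exact ⟨fun h' => ⟨hz, h'⟩, fun h' => h'.2⟩
        · exact iff_of_false (not_le.2 hb) (fun h' => absurd h'.2 (not_le.2 ha))
    have himem : i ∈ Finset.univ.filter (fun z => ratio D r z ≤ tv) := by
      rw [Finset.mem_filter]
      exact ⟨Finset.mem_univ _, le_of_eq hxi⟩
    have hpos : 0 < (Finset.univ.filter (fun z => ratio D r z ≤ tv)).card :=
      Finset.card_pos.2 ⟨i, himem⟩
    show (Finset.univ.filter (fun z => ratio D r' z ≤ tv)).card
        < (Finset.univ.filter (fun z => ratio D r z ≤ tv)).card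
    rw [hfe, Finset.card_erase_of_mem himem]
    omega
  exact no_strict_improvement (hopt.2 r' hr')
    (strict_of_counts (x := fun z => r z / D z) (y := fun z => r' z / D z) tv h1 h2)

private lemma tight_of_lexopt (f : Finset V → ℝ) (hf0 : f ∅ = 0)
    (hsub : ∀ S T : Finset V, f (S ∩ T) + f (S ∪ T) ≤ f S + f T)
    (D : V → ℝ) (hD : ∀ i, 0 < D i) (r : V → ℝ) (hr : r ∈ polyA f)
    (hopt : LexOptimal (polyA f) D r) :
    ∀ m, 1 ≤ m → m ≤ numLevels D r → Tight f r (Sk D r m) := by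
  have hDne : ∀ i, D i ≠ 0 := fun i => ne_of_gt (hD i)
  by_contra hcon
  push_neg at hcon
  obtain ⟨m0, hm01, hm0K, hm0t⟩ := hcon
  have hP : ∃ n, 1 ≤ n ∧ n ≤ numLevels D r ∧ ¬ Tight f r (Sk D r n) := ⟨m0, hm01, hm0K, hm0t⟩
  obtain ⟨hk1, hkK, hkt⟩ := Nat.find_spec hP
  set k := Nat.find hP with hkdef
  have hmin : ∀ l, 1 ≤ l → l < k → Tight f r (Sk D r l) := by
    intro l hl1 hlk
    by_contra hlt
    exact Nat.find_min hP hlk ⟨hl1, by omega, hlt⟩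
  obtain ⟨P0, hP0t, hP0split, hP0disj⟩ :
      ∃ P0 : Finset V, Tight f r P0 ∧ Sk D r k = P0 ∪ level D r k ∧ Disjoint P0 (level D r k) := by
    rcases eq_or_lt_of_le hk1 with h1 | h2
    · refine ⟨∅, tight_empty hf0, ?_, Finset.disjoint_empty_left _⟩
      rw [← h1, Sk_one D r (by omega), Finset.empty_union]
    · have hk1' : k - 1 + 1 = k := by omega
      have hsucc := Sk_succ D r (m := k - 1) (by omega) (by rw [hk1']; exact hkK)
      have hdisj := Sk_disj D r (m := k - 1) (by omega) (by rw [hk1']; exact hkK)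
      rw [hk1'] at hsucc hdisj
      exact ⟨Sk D r (k-1), hmin (k-1) (by omega) (by omega), hsucc, hdisj⟩
  have hvk0 : 0 ≤ v D r k := by
    obtain ⟨i, hi⟩ := exists_ratio_eq_v D r hk1 hkK
    rw [← hi]
    exact div_nonneg (hr.1 i) (le_of_lt (hD i))
  by_cases hcase : ∀ i ∈ level D r k, ∃ T, Tight f r T ∧ i ∈ T
  · -- every element of the level lies in a tight set
    set Ti : V → Finset V := fun i =>
      Finset.univ.filter (fun j => ∀ T : Finset V, Tight f r T → i ∈ T → j ∈ T) with hTidef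
    have hiTi : ∀ i, i ∈ Ti i := by
      intro i
      rw [hTidef, Finset.mem_filter]
      exact ⟨Finset.mem_univ i, fun T _ h => h⟩
    have htTi : ∀ i ∈ level D r k, Tight f r (Ti i) := by
      intro i hi
      obtain ⟨T₀, hT₀, hiT₀⟩ := hcase i hi
      exact tight_Ti hr hsub hT₀ hiT₀
    have hex : ∃ i ∈ level D r k, ¬ Ti i ⊆ Sk D r k := by
      by_contra hall
      push_neg at hall
      have hW : Tight f r (P0 ∪ (level D r k).biUnion Ti) :=
        (tight_union hr hsub hP0t (tight_biUnion hf0 hr hsub _ _ htTi)).1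
      have hWeq : P0 ∪ (level D r k).biUnion Ti = Sk D r k := by
        apply subset_antisymm
        · apply Finset.union_subset
          · rw [hP0split]; exact Finset.subset_union_left
          · apply Finset.biUnion_subset.2
            intro i hi
            exact hall i hi
        · intro z hz
          rw [hP0split] at hz
          rcases Finset.mem_union.1 hz with h | h
          · exact Finset.mem_union_left _ h
          · exact Finset.mem_union_right _ (Finset.mem_biUnion.2 ⟨z, h, hiTi z⟩)
      rw [hWeq] at hW
      exact hkt hW
    obtain ⟨i, hiL, hnsub⟩ := hex
    obtain ⟨j, hjTi, hjS⟩ := Finset.not_subset.1 hnsub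
    have hjprop : ∀ T, Tight f r T → i ∈ T → j ∈ T := by
      rw [hTidef] at hjTi
      exact (Finset.mem_filter.1 hjTi).2
    have hxj : v D r k < ratio D r j := by
      by_contra h
      apply hjS
      show j ∈ Finset.univ.filter (fun z => ratio D r z ≤ v D r k)
      rw [Finset.mem_filter]
      exact ⟨Finset.mem_univ j, not_lt.1 h⟩
    have hxi : ratio D r i = v D r k := (Finset.mem_filter.1 hiL).2
    have hij : i ≠ j := by
      intro h
      rw [← h, hxi] at hxj
      exact lt_irrefl _ hxj
    set G : Finset (Finset V) := Finset.univ.filter (fun T => i ∈ T ∧ j ∉ T) with hGdef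
    have hGne : G.Nonempty := by
      refine ⟨{i}, ?_⟩
      rw [hGdef, Finset.mem_filter]
      refine ⟨Finset.mem_univ _, Finset.mem_singleton_self i, ?_⟩
      rw [Finset.mem_singleton]
      exact Ne.symm hij
    have hGslack : ∀ T ∈ G, 0 < f T - ∑ z ∈ T, r z := by
      intro T hT
      rw [hGdef, Finset.mem_filter] at hT
      obtain ⟨_, hiT, hjT⟩ := hT
      have hle := hr.2 T
      have hne : ∑ z ∈ T, r z ≠ f T := fun h => hjT (hjprop T h hiT)
      have := lt_of_le_of_ne hle hne
      linarith
    set ε1 := (G.image (fun T => f T - ∑ z ∈ T, r z)).min' (hGne.image _) with hε1def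
    have hε1pos : 0 < ε1 := by
      obtain ⟨T, hT, hTe⟩ := Finset.mem_image.1
        (Finset.min'_mem (G.image (fun T => f T - ∑ z ∈ T, r z)) (hGne.image _))
      rw [hε1def, ← hTe]
      exact hGslack T hT
    have hε1le : ∀ T, i ∈ T → j ∉ T → ε1 ≤ f T - ∑ z ∈ T, r z := by
      intro T hiT hjT
      apply Finset.min'_le
      apply Finset.mem_image_of_mem
      rw [hGdef, Finset.mem_filter]
      exact ⟨Finset.mem_univ T, hiT, hjT⟩
    set ε2 := D j * (ratio D r j - v D r k) with hε2def
    have hε2pos : 0 < ε2 := mul_pos (hD j) (by linarith)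
    have hmin_pos : 0 < min ε1 ε2 := lt_min hε1pos hε2pos
    set ε := min ε1 ε2 / 2 with hεdef
    have hεpos : 0 < ε := by positivity
    have hεle1 : ε ≤ ε1 := by
      have h1 : min ε1 ε2 / 2 ≤ min ε1 ε2 := half_le_self (le_of_lt hmin_pos)
      have h2 := min_le_left ε1 ε2
      rw [hεdef]; linarith
    have hεlt2 : ε < ε2 := by
      have h1 : min ε1 ε2 / 2 < min ε1 ε2 := half_lt_self hmin_pos
      have h2 := min_le_right ε1 ε2
      rw [hεdef]; linarith
    have hrj : D j * ratio D r j = r j := by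
      show D j * (r j / D j) = r j
      rw [mul_comm, div_mul_cancel₀ _ (hDne j)]
    have hexp : D j * (ratio D r j - v D r k) = D j * ratio D r j - D j * v D r k :=
      mul_sub _ _ _
    have hDjvk : 0 ≤ D j * v D r k := mul_nonneg (le_of_lt (hD j)) hvk0
    have hεltrj : ε < r j := by
      rw [hε2def] at hεlt2
      linarith [hεlt2, hexp, hrj, hDjvk]
    set r2 : V → ℝ := fun z => if z = i then r i + ε else if z = j then r j - ε else r z
      with hr2def
    have hr2i : r2 i = r i + ε := by rw [hr2def]; simp
    have hr2j : r2 j = r j - ε := by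
      rw [hr2def]
      simp only [if_neg (Ne.symm hij)]
      simp
    have hr2z : ∀ z, z ≠ i → z ≠ j → r2 z = r z := by
      intro z h1 h2
      rw [hr2def]
      simp only [if_neg h1, if_neg h2]
    have hr2A : r2 ∈ polyA f := by
      constructor
      · intro z
        by_cases h1 : z = i
        · rw [h1, hr2i]; have := hr.1 i; linarith
        · by_cases h2 : z = j
          · rw [h2, hr2j]; linarith
          · rw [hr2z z h1 h2]; exact hr.1 z
      · intro T
        have hsum : ∑ z ∈ T, r2 z
            = ∑ z ∈ T, r z + (if i ∈ T then ε else 0) - (if j ∈ T then ε else 0) :=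
          sum_update2 r hij ε T
        rw [hsum]
        by_cases hiT : i ∈ T
        · by_cases hjT : j ∈ T
          · rw [if_pos hiT, if_pos hjT]
            have := hr.2 T
            linarith
          · rw [if_pos hiT, if_neg hjT]
            have := hε1le T hiT hjT
            linarith
        · rw [if_neg hiT]
          have := hr.2 T
          by_cases hjT : j ∈ T
          · rw [if_pos hjT]; linarith
          · rw [if_neg hjT]; linarith
    have hy_i : v D r k < ratio D r2 i := by
      show v D r k < r2 i / D i
      rw [hr2i, add_div]
      have hxi' : r i / D i = v D r k := hxi
      have : 0 < ε / D i := div_pos hεpos (hD i)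
      linarith
    have hy_j : v D r k < ratio D r2 j := by
      show v D r k < r2 j / D j
      rw [hr2j, lt_div_iff₀ (hD j)]
      rw [hε2def] at hεlt2
      linarith [hexp, hrj]
    have hsame : ∀ z, z ≠ i →
        (ratio D r2 z = ratio D r z ∨ (v D r k < ratio D r z ∧ v D r k < ratio D r2 z)) := by
      intro z hz
      by_cases h2 : z = j
      · subst h2; exact Or.inr ⟨hxj, hy_j⟩
      · left
        show r2 z / D z = r z / D z
        rw [hr2z z hz h2]
    exact improve_contradiction f D hD r r2 hr2A hopt (v D r k) hxi hy_i hsame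
  · -- some element of the level lies in no tight set
    push_neg at hcase
    obtain ⟨i, hiL, hiT⟩ := hcase
    have hxi : ratio D r i = v D r k := (Finset.mem_filter.1 hiL).2
    set G : Finset (Finset V) := Finset.univ.filter (fun T => i ∈ T) with hGdef
    have hGne : G.Nonempty := by
      refine ⟨{i}, ?_⟩
      rw [hGdef, Finset.mem_filter]
      exact ⟨Finset.mem_univ _, Finset.mem_singleton_self i⟩
    have hGslack : ∀ T ∈ G, 0 < f T - ∑ z ∈ T, r z := by
      intro T hT
      rw [hGdef, Finset.mem_filter] at hT
      have hle := hr.2 T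
      have hne : ∑ z ∈ T, r z ≠ f T := fun h => (hiT T h) hT.2
      have := lt_of_le_of_ne hle hne
      linarith
    set ε := (G.image (fun T => f T - ∑ z ∈ T, r z)).min' (hGne.image _) with hεdef
    have hεpos : 0 < ε := by
      obtain ⟨T, hT, hTe⟩ := Finset.mem_image.1
        (Finset.min'_mem (G.image (fun T => f T - ∑ z ∈ T, r z)) (hGne.image _))
      rw [hεdef, ← hTe]
      exact hGslack T hT
    have hεle : ∀ T, i ∈ T → ε ≤ f T - ∑ z ∈ T, r z := by
      intro T hiT'
      apply Finset.min'_le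
      apply Finset.mem_image_of_mem
      rw [hGdef, Finset.mem_filter]
      exact ⟨Finset.mem_univ T, hiT'⟩
    set r2 : V → ℝ := fun z => if z = i then r i + ε else r z with hr2def
    have hr2i : r2 i = r i + ε := by rw [hr2def]; simp
    have hr2z : ∀ z, z ≠ i → r2 z = r z := by
      intro z h1
      rw [hr2def]
      simp only [if_neg h1]
    have hr2A : r2 ∈ polyA f := by
      constructor
      · intro z
        by_cases h1 : z = i
        · rw [h1, hr2i]; have := hr.1 i; linarith
        · rw [hr2z z h1]; exact hr.1 z
      · intro T
        have hsum : ∑ z ∈ T, r2 z = ∑ z ∈ T, r z + (if i ∈ T then ε else 0) :=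
          sum_update1 r i ε T
        rw [hsum]
        by_cases hiT' : i ∈ T
        · rw [if_pos hiT']
          have := hεle T hiT'
          linarith
        · rw [if_neg hiT']
          have := hr.2 T
          linarith
    have hy_i : v D r k < ratio D r2 i := by
      show v D r k < r2 i / D i
      rw [hr2i, add_div]
      have hxi' : r i / D i = v D r k := hxi
      have : 0 < ε / D i := div_pos hεpos (hD i)
      linarith
    have hsame : ∀ z, z ≠ i →
        (ratio D r2 z = ratio D r z ∨ (v D r k < ratio D r z ∧ v D r k < ratio D r2 z)) := by
      intro z hz
      left
      show r2 z / D z = r z / D z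
      rw [hr2z z hz]
    exact improve_contradiction f D hD r r2 hr2A hopt (v D r k) hxi hy_i hsame

end MainLemmas




/-- a vector `r ∈ A` is lexicographically optimal (for the ratios `r_i/D_i`)
if and only if `Σ_{i∈L_1} r_i = f(L_1)` and, for every `2 ≤ k ≤ K(r)`,
`Σ_{i∈L_k} r_i = f(∪_{l=1}^{k} L_l) − f(∪_{l=1}^{k−1} L_l)`. -/
theorem lexopt_characterization {V : Type*} [Fintype V] [DecidableEq V]
    (f : Finset V → ℝ) (hf0 : f ∅ = 0)
    (hmono : ∀ S T : Finset V, S ⊆ T → f S ≤ f T)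
    (hsub : ∀ S T : Finset V, f (S ∩ T) + f (S ∪ T) ≤ f S + f T)
    (D : V → ℝ) (hD : ∀ i, 0 < D i)
    (r : V → ℝ) (hr : r ∈ polyA f) :
    LexOptimal (polyA f) D r ↔
      (∑ i ∈ level D r 1, r i = f (level D r 1) ∧
        ∀ k : ℕ, 2 ≤ k → k ≤ numLevels D r →
          ∑ i ∈ level D r k, r i =
            f ((Finset.Icc 1 k).biUnion (level D r)) -
              f ((Finset.Icc 1 (k - 1)).biUnion (level D r))) := by
  constructor
  · intro hopt
    have htall := tight_of_lexopt f hf0 hsub D hD r hr hopt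
    constructor
    · by_cases hK1 : 1 ≤ numLevels D r
      · have hS1 : Sk D r 1 = level D r 1 := Sk_one D r hK1
        rw [← hS1]
        exact htall 1 le_rfl hK1
      · have hK0 : numLevels D r = 0 := by omega
        have himg : (Finset.univ.image (ratio D r)) = ∅ := by
          have hcard : (Finset.univ.image (ratio D r)).card = 0 := by
            rw [← Finset.length_sort (α := ℝ) (· ≤ ·)]
            exact hK0
          exact Finset.card_eq_zero.1 hcard
        have huniv : (Finset.univ : Finset V) = ∅ := Finset.image_eq_empty.1 himg
        have hlev : level D r 1 = ∅ :=
          Finset.subset_empty.1 (huniv ▸ Finset.subset_univ (level D r 1))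
        rw [hlev, Finset.sum_empty, hf0]
    · intro k hk2 hkK
      have hk1 : 1 ≤ k := by omega
      have hbU1 := biUnion_levels D r hk1 hkK
      have hbU2 := biUnion_levels D r (show 1 ≤ k - 1 by omega)
        (show k - 1 ≤ numLevels D r by omega)
      have hk1' : k - 1 + 1 = k := by omega
      have hsucc := Sk_succ D r (m := k - 1) (by omega) (by rw [hk1']; exact hkK)
      have hdisj := Sk_disj D r (m := k - 1) (by omega) (by rw [hk1']; exact hkK)
      rw [hk1'] at hsucc hdisj
      have hsum : ∑ i ∈ Sk D r k, r i
          = ∑ i ∈ Sk D r (k - 1), r i + ∑ i ∈ level D r k, r i := by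
        rw [hsucc, Finset.sum_union hdisj]
      have e1 : ∑ i ∈ Sk D r k, r i = f (Sk D r k) := htall k hk1 hkK
      have e2 : ∑ i ∈ Sk D r (k - 1), r i = f (Sk D r (k - 1)) :=
        htall (k - 1) (by omega) (by omega)
      rw [hbU1, hbU2]
      linarith
  · rintro ⟨h1, h2⟩
    have htall : ∀ m, 1 ≤ m → m ≤ numLevels D r → Tight f r (Sk D r m) := by
      intro m hm1
      induction m, hm1 using Nat.le_induction with
      | base =>
        intro hK1
        show ∑ i ∈ Sk D r 1, r i = f (Sk D r 1)
        rw [Sk_one D r hK1]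
        exact h1
      | succ l hl ih =>
        intro hlK
        have hih : ∑ i ∈ Sk D r l, r i = f (Sk D r l) := ih (by omega)
        have hsucc := Sk_succ D r hl hlK
        have hdisj := Sk_disj D r hl hlK
        have hsp := h2 (l + 1) (by omega) hlK
        simp only [Nat.add_sub_cancel] at hsp
        rw [biUnion_levels D r (by omega) hlK, biUnion_levels D r hl (by omega)] at hsp
        have hsum : ∑ i ∈ Sk D r (l + 1), r i
            = ∑ i ∈ Sk D r l, r i + ∑ i ∈ level D r (l + 1), r i := by
          rw [hsucc, Finset.sum_union hdisj]
        show ∑ i ∈ Sk D r (l + 1), r i = f (Sk D r (l + 1))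
        rw [hsum]
        linarith
    exact lexopt_of_tight f D hD r hr htall

end SharingEcon
end
end
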